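/- arXiv:2604.22426 — 4 statements merged into one kernel-verified Lean document; each statement's English description precedes it below -/
import Mathlib

section
/- Let C₁ > 0, λ > 0 and θ ∈ (0,1]. Let hmin : ℝ → ℝ satisfy hmin(h) > 0 for every h > 0 and hmin(h)/h → θ as h → 0 from the right. For h > 0 set M(h) = C₁·(1 + 1/(2·λ·hmin(h))) and ρ(h) = M(h)/(1 + M(h)). Then ρ(h)^{1/h} → exp(−2·λ·θ/C₁) as h → 0 from the right. -/
open Filter Real Set

lemma slope_log_one_add :
    Tendsto (fun x : ℝ => Real.log (1 + x) / x) (nhdsWithin 0 {(0:ℝ)}ᶜ) (nhds 1) := by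
  have hderiv : HasDerivAt (fun x : ℝ => Real.log (1 + x)) 1 0 := by
    have h1 : HasDerivAt (fun x : ℝ => 1 + x) 1 0 := by
      simpa using (hasDerivAt_id (0:ℝ)).const_add 1
    have h2 := (Real.hasDerivAt_log (by norm_num : (1:ℝ) + 0 ≠ 0)).comp 0 h1
    have h3 : HasDerivAt (Real.log ∘ fun x : ℝ => 1 + x) 1 0 := by simpa using h2
    exact h3
  have h := hasDerivAt_iff_tendsto_slope.mp hderiv
  refine h.congr' ?_
  filter_upwards [self_mem_nhdsWithin] with x hx
  simp [slope_def_field, div_eq_div_iff, hx]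

theorem discrete_contraction_asymptotics_pos_lambda
    (C₁ lam θ : ℝ) (hC : 0 < C₁) (hlam : 0 < lam) (hθ0 : 0 < θ) (hθ1 : θ ≤ 1)
    (hmin : ℝ → ℝ) (hminpos : ∀ h : ℝ, 0 < h → 0 < hmin h)
    (hquasi : Tendsto (fun h : ℝ => hmin h / h) (nhdsWithin 0 (Set.Ioi 0)) (nhds θ))
    (M ρ : ℝ → ℝ)
    (hM : ∀ h : ℝ, 0 < h → M h = C₁ * (1 + 1 / (2 * lam * hmin h)))
    (hρ : ∀ h : ℝ, 0 < h → ρ h = M h / (1 + M h)) :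
    Tendsto (fun h : ℝ => ρ h ^ (1 / h)) (nhdsWithin 0 (Set.Ioi 0))
      (nhds (Real.exp (-(2 * lam * θ) / C₁))) := by
  set L := nhdsWithin (0:ℝ) (Set.Ioi 0) with hL
  have hsv : ∀ᶠ h : ℝ in L, 0 < h := self_mem_nhdsWithin
  set t : ℝ → ℝ := fun h => 1 / M h with ht
  have hMpos : ∀ h : ℝ, 0 < h → 0 < M h := by
    intro h hh
    have hm := hminpos h hh
    rw [hM h hh]
    positivity
  have htpos : ∀ h : ℝ, 0 < h → 0 < t h := fun h hh => one_div_pos.mpr (hMpos h hh)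
  -- hmin → 0
  have hmin0 : Tendsto hmin L (nhds 0) := by
    have hid : Tendsto (fun h : ℝ => h) L (nhds 0) :=
      tendsto_id.mono_left nhdsWithin_le_nhds
    have := hquasi.mul hid
    rw [mul_zero] at this
    refine this.congr' ?_
    filter_upwards [hsv] with h hh
    field_simp
  -- t h / h formula
  have hth_eq : ∀ h : ℝ, 0 < h →
      t h / h = (2 * lam * (hmin h / h)) / (C₁ * (2 * lam * hmin h + 1)) := by
    intro h hh
    have hm := hminpos h hh
    have hd : (0:ℝ) < 2 * lam * hmin h + 1 := by positivity
    simp only [ht, hM h hh]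
    field_simp
  -- limit of t/h
  have hth : Tendsto (fun h : ℝ => t h / h) L (nhds (2 * lam * θ / C₁)) := by
    have hnum : Tendsto (fun h : ℝ => 2 * lam * (hmin h / h)) L (nhds (2 * lam * θ)) :=
      tendsto_const_nhds.mul hquasi
    have hden : Tendsto (fun h : ℝ => C₁ * (2 * lam * hmin h + 1)) L (nhds (C₁ * (2 * lam * 0 + 1))) := by
      exact tendsto_const_nhds.mul ((tendsto_const_nhds.mul hmin0).add tendsto_const_nhds)
    have hden' : (C₁ * (2 * lam * 0 + 1)) ≠ 0 := by
      simp; positivity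
    have := hnum.div hden hden'
    have heq : (2 * lam * θ) / (C₁ * (2 * lam * 0 + 1)) = 2 * lam * θ / C₁ := by
      norm_num
    rw [heq] at this
    refine this.congr' ?_
    filter_upwards [hsv] with h hh
    exact (hth_eq h hh).symm
  -- t → 0 within ≠ 0
  have ht0 : Tendsto t L (nhdsWithin 0 {(0:ℝ)}ᶜ) := by
    rw [tendsto_nhdsWithin_iff]
    constructor
    · have hid : Tendsto (fun h : ℝ => h) L (nhds 0) :=
        tendsto_id.mono_left nhdsWithin_le_nhds
      have := hth.mul hid
      rw [mul_zero] at this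
      refine this.congr' ?_
      filter_upwards [hsv] with h hh
      field_simp
    · filter_upwards [hsv] with h hh
      exact (htpos h hh).ne'
  have hcomp : Tendsto (fun h : ℝ => Real.log (1 + t h) / t h) L (nhds 1) :=
    slope_log_one_add.comp ht0
  -- log ρ = - log (1 + t)
  have hlogρ : ∀ h : ℝ, 0 < h → Real.log (ρ h) = -Real.log (1 + t h) := by
    intro h hh
    have hMp := hMpos h hh
    have h1M : (0:ℝ) < 1 + M h := by linarith
    rw [hρ h hh, Real.log_div hMp.ne' h1M.ne']
    have : 1 + t h = (1 + M h) / M h := by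
      simp only [ht]; field_simp; ring
    rw [this, Real.log_div h1M.ne' hMp.ne']
    ring
  -- main exponent limit
  have hF : Tendsto (fun h : ℝ => Real.log (ρ h) * (1 / h)) L
      (nhds (-(2 * lam * θ) / C₁)) := by
    have := (hcomp.mul hth).neg
    rw [one_mul] at this
    have heq : -(2 * lam * θ / C₁) = -(2 * lam * θ) / C₁ := by ring
    rw [heq] at this
    refine this.congr' ?_
    filter_upwards [hsv] with h hh
    rw [hlogρ h hh]
    have htne := (htpos h hh).ne'
    have hhne := hh.ne'
    field_simp
  have := (Real.continuous_exp.tendsto _).comp hF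
  refine this.congr' ?_
  filter_upwards [hsv] with h hh
  have hρpos : 0 < ρ h := by
    rw [hρ h hh]
    have := hMpos h hh
    positivity
  simp only [Function.comp]
  rw [Real.rpow_def_of_pos hρpos]
end

section
/- Let C₂ > 0 and θ ∈ (0,1]. Let hmin : ℝ → ℝ satisfy hmin(h) > 0 for every h > 0 and hmin(h)/h → θ as h → 0 from the right. For h > 0 set M(h) = C₂·(1 + 1/hmin(h)) and ρ(h) = M(h)/(1 + M(h)). Then ρ(h)^{1/h} → exp(−θ/C₂) as h → 0 from the right. -/
open Filter Real Set

lemma log_one_add_div_self_tendsto :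
    Tendsto (fun x : ℝ => Real.log (1 + x) / x) (nhdsWithin 0 {0}ᶜ) (nhds 1) := by
  have hd : HasDerivAt (fun x : ℝ => Real.log (1 + x)) 1 0 := by
    have h1 : HasDerivAt (fun x : ℝ => 1 + x) 1 (0 : ℝ) := by
      simpa using (hasDerivAt_id (0 : ℝ)).const_add 1
    have := (Real.hasDerivAt_log (by norm_num : (1 : ℝ) + 0 ≠ 0)).comp 0 h1
    simpa [Function.comp_def] using this
  have := hasDerivAt_iff_tendsto_slope.mp hd
  refine this.congr fun x => ?_
  simp [slope, div_eq_inv_mul]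

theorem discrete_contraction_asymptotics_zero_lambda
    (C₂ θ : ℝ) (hC : 0 < C₂) (hθ0 : 0 < θ) (hθ1 : θ ≤ 1)
    (hmin : ℝ → ℝ) (hminpos : ∀ h : ℝ, 0 < h → 0 < hmin h)
    (hquasi : Tendsto (fun h : ℝ => hmin h / h) (nhdsWithin 0 (Set.Ioi 0)) (nhds θ))
    (M ρ : ℝ → ℝ)
    (hM : ∀ h : ℝ, 0 < h → M h = C₂ * (1 + 1 / hmin h))
    (hρ : ∀ h : ℝ, 0 < h → ρ h = M h / (1 + M h)) :
    Tendsto (fun h : ℝ => ρ h ^ (1 / h)) (nhdsWithin 0 (Set.Ioi 0))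
      (nhds (Real.exp (-θ / C₂))) := by
  set f : ℝ → ℝ := fun h => hmin h / (C₂ * (hmin h + 1)) with hf
  -- hmin tends to 0
  have hhid : Tendsto (fun h : ℝ => h) (nhdsWithin 0 (Set.Ioi 0)) (nhds 0) :=
    tendsto_nhdsWithin_of_tendsto_nhds tendsto_id
  have hmin0 : Tendsto hmin (nhdsWithin 0 (Set.Ioi 0)) (nhds 0) := by
    have := hquasi.mul hhid
    rw [show θ * 0 = 0 by ring] at this
    refine this.congr' ?_
    filter_upwards [self_mem_nhdsWithin] with h (hh : 0 < h)
    field_simp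
  -- f tends to 0
  have hden : Tendsto (fun h : ℝ => C₂ * (hmin h + 1)) (nhdsWithin 0 (Set.Ioi 0))
      (nhds (C₂ * (0 + 1))) := (tendsto_const_nhds.mul (hmin0.add tendsto_const_nhds))
  have hdne : C₂ * ((0:ℝ) + 1) ≠ 0 := by positivity
  have hf0 : Tendsto f (nhdsWithin 0 (Set.Ioi 0)) (nhds 0) := by
    have := hmin0.div hden hdne
    rw [zero_div] at this
    exact this
  -- f h positive on Ioi 0
  have hfpos : ∀ h : ℝ, 0 < h → 0 < f h := fun h hh => by
    have h1 := hminpos h hh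
    exact div_pos h1 (by positivity)
  -- f / h tends to θ / C₂
  have hfh : Tendsto (fun h : ℝ => f h / h) (nhdsWithin 0 (Set.Ioi 0)) (nhds (θ / C₂)) := by
    have h2 : Tendsto (fun h : ℝ => (hmin h / h) * (1 / (C₂ * (hmin h + 1))))
        (nhdsWithin 0 (Set.Ioi 0)) (nhds (θ * (1 / (C₂ * (0 + 1))))) :=
      hquasi.mul ((tendsto_const_nhds (x := (1:ℝ))).div hden hdne)
    have heq : θ * (1 / (C₂ * ((0:ℝ) + 1))) = θ / C₂ := by field_simp; ring
    rw [heq] at h2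
    refine h2.congr' ?_
    filter_upwards [self_mem_nhdsWithin] with h (hh : 0 < h)
    have := hminpos h hh
    field_simp [hf]
    have hne : C₂ * (hmin h + 1) ≠ 0 := (mul_pos hC (by linarith)).ne'
    simp only [hf]
    field_simp
  -- log(1+f h)/(f h) tends to 1
  have hfne : Tendsto f (nhdsWithin 0 (Set.Ioi 0)) (nhdsWithin 0 {0}ᶜ) := by
    refine tendsto_nhdsWithin_of_tendsto_nhds_of_eventually_within _ hf0 ?_
    filter_upwards [self_mem_nhdsWithin] with h (hh : 0 < h)
    exact ne_of_gt (hfpos h hh)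
  have hlog1 : Tendsto (fun h : ℝ => Real.log (1 + f h) / f h)
      (nhdsWithin 0 (Set.Ioi 0)) (nhds 1) := log_one_add_div_self_tendsto.comp hfne
  -- g := (1/h) * log(1+f h) tends to θ/C₂
  have hg : Tendsto (fun h : ℝ => (1 / h) * Real.log (1 + f h))
      (nhdsWithin 0 (Set.Ioi 0)) (nhds (θ / C₂)) := by
    have := hlog1.mul hfh
    rw [show (1:ℝ) * (θ / C₂) = θ / C₂ by ring] at this
    refine this.congr' ?_
    filter_upwards [self_mem_nhdsWithin] with h (hh : 0 < h)
    have hne := ne_of_gt (hfpos h hh)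
    field_simp
  -- conclude via exp
  have hfinal : Tendsto (fun h : ℝ => Real.exp (-((1 / h) * Real.log (1 + f h))))
      (nhdsWithin 0 (Set.Ioi 0)) (nhds (Real.exp (-θ / C₂))) := by
    have : Tendsto (fun h : ℝ => -((1 / h) * Real.log (1 + f h)))
        (nhdsWithin 0 (Set.Ioi 0)) (nhds (-(θ / C₂))) := hg.neg
    have := (Real.continuous_exp.tendsto _).comp this
    simpa [neg_div, Function.comp_def] using this
  refine hfinal.congr' ?_
  filter_upwards [self_mem_nhdsWithin] with h (hh : 0 < h)
  have hm := hminpos h hh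
  have hMpos : 0 < M h := by rw [hM h hh]; positivity
  have h1M : 0 < 1 + M h := by linarith
  have hρpos : 0 < ρ h := by rw [hρ h hh]; positivity
  have hlogρ : Real.log (ρ h) = -Real.log (1 + f h) := by
    rw [hρ h hh, Real.log_div (ne_of_gt hMpos) (ne_of_gt h1M)]
    have h1f : 1 + f h = (1 + M h) / M h := by
      rw [hM h hh, hf]
      field_simp
      ring
    rw [h1f, Real.log_div (ne_of_gt h1M) (ne_of_gt hMpos)]
    ring
  rw [Real.rpow_def_of_pos hρpos, hlogρ]
  ring_nf
end

section
/- Let L > 0 and ε > 0, let s be a finite set of positive natural numbers, and let g : ℕ → ℝ. For n ∈ s set k_n = n·π/L, and define on the rectangle (0,L) × (0,ε) the function w(x,y) = Σ_{n∈s} g(n)·(sinh(k_n·(ε − y))/sinh(k_n·ε))·sin(k_n·x), whose partial derivatives are ∂_x w(x,y) = Σ_{n∈s} g(n)·k_n·(sinh(k_n·(ε − y))/sinh(k_n·ε))·cos(k_n·x) and ∂_y w(x,y) = −Σ_{n∈s} g(n)·k_n·(cosh(k_n·(ε − y))/sinh(k_n·ε))·sin(k_n·x). Then the iterated integral ∫₀^L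 ∫₀^ε ( (∂_x w(x,y))² + (∂_y w(x,y))² ) dy dx equals (L/2)·Σ_{n∈s} g(n)²·k_n·coth(k_n·ε), where coth(x) = cosh(x)/sinh(x). -/
open Real intervalIntegral Finset

lemma my_int_cos_c {c : ℝ} (L : ℝ) (hc : c ≠ 0) :
    ∫ x in (0:ℝ)..L, Real.cos (c * x) = Real.sin (c * L) / c := by
  rw [intervalIntegral.integral_comp_mul_left (fun x => Real.cos x) hc]
  simp [integral_cos, div_eq_inv_mul, smul_eq_mul]

lemma my_int_cos_sq {c : ℝ} (L : ℝ) (hc : c ≠ 0) :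
    ∫ x in (0:ℝ)..L, Real.cos (c * x) ^ 2
      = (Real.cos (c*L) * Real.sin (c*L) + c * L) / (2 * c) := by
  rw [intervalIntegral.integral_comp_mul_left (fun x => Real.cos x ^ 2) hc]
  rw [integral_cos_sq]
  field_simp
  ring_nf
  rw [Real.cos_zero, Real.sin_zero]
  linear_combination (Real.cos (c*L) * Real.sin (c*L) + c*L) * (mul_inv_cancel₀ hc)

lemma my_int_sin_sq {c : ℝ} (L : ℝ) (hc : c ≠ 0) :
    ∫ x in (0:ℝ)..L, Real.sin (c * x) ^ 2
      = (- Real.sin (c*L) * Real.cos (c*L) + c * L) / (2 * c) := by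
  rw [intervalIntegral.integral_comp_mul_left (fun x => Real.sin x ^ 2) hc]
  rw [integral_sin_sq]
  field_simp
  ring_nf
  rw [Real.cos_zero, Real.sin_zero]
  linear_combination (c*L - Real.sin (c*L) * Real.cos (c*L)) * (mul_inv_cancel₀ hc)

lemma my_integral_cosh (a b : ℝ) : ∫ x in a..b, Real.cosh x = Real.sinh b - Real.sinh a :=
  integral_eq_sub_of_hasDerivAt (fun x _ => Real.hasDerivAt_sinh x)
    (Real.continuous_cosh.intervalIntegrable a b)

lemma my_int_cosh_sub {c : ℝ} (ε : ℝ) (hc : c ≠ 0) :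
    ∫ y in (0:ℝ)..ε, Real.cosh (c * (ε - y)) = Real.sinh (c * ε) / c := by
  rw [intervalIntegral.integral_comp_sub_left (fun u => Real.cosh (c * u)) ε]
  simp only [sub_self, sub_zero]
  rw [intervalIntegral.integral_comp_mul_left (fun x => Real.cosh x) hc]
  simp [my_integral_cosh, div_eq_inv_mul, smul_eq_mul]

lemma my_orth_cos {L : ℝ} (hL : 0 < L) {n m : ℕ} (hn : 0 < n) (hm : 0 < m) :
    (∫ x in (0:ℝ)..L, Real.cos ((n:ℝ)*π/L*x) * Real.cos ((m:ℝ)*π/L*x))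
      = if n = m then L/2 else 0 := by
  have hLne : L ≠ 0 := hL.ne'
  by_cases h : n = m
  · subst h
    have hnR : ((n:ℝ)) ≠ 0 := Nat.cast_ne_zero.mpr hn.ne'
    have hc : (n:ℝ)*π/L ≠ 0 := div_ne_zero (mul_ne_zero hnR Real.pi_ne_zero) hLne
    simp only [if_pos]
    simp_rw [← sq]
    rw [my_int_cos_sq L hc]
    have hcl : (n:ℝ)*π/L*L = (n:ℝ)*π := by field_simp
    rw [hcl, Real.sin_nat_mul_pi]
    have hnpi : (n:ℝ)*π ≠ 0 := mul_ne_zero hnR Real.pi_ne_zero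
    field_simp
    ring
  · rw [if_neg h]
    have h1 : ((n:ℝ) - m) ≠ 0 := sub_ne_zero.mpr (by exact_mod_cast h)
    have h2 : ((n:ℝ) + m) ≠ 0 := by
      have : (0:ℝ) < (n:ℝ) + m := by
        have := Nat.cast_pos (α := ℝ) |>.mpr hn
        have := Nat.cast_pos (α := ℝ) |>.mpr hm
        linarith
      exact this.ne'
    have hc1 : ((n:ℝ)-m)*π/L ≠ 0 := div_ne_zero (mul_ne_zero h1 Real.pi_ne_zero) hLne
    have hc2 : ((n:ℝ)+m)*π/L ≠ 0 := div_ne_zero (mul_ne_zero h2 Real.pi_ne_zero) hLne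
    have key : ∀ x:ℝ, Real.cos ((n:ℝ)*π/L*x) * Real.cos ((m:ℝ)*π/L*x)
        = (Real.cos ((((n:ℝ)-m)*π/L)*x) + Real.cos ((((n:ℝ)+m)*π/L)*x))/2 := by
      intro x
      rw [show (((n:ℝ)-m)*π/L)*x = (n:ℝ)*π/L*x - (m:ℝ)*π/L*x by ring,
          show (((n:ℝ)+m)*π/L)*x = (n:ℝ)*π/L*x + (m:ℝ)*π/L*x by ring,
          Real.cos_sub, Real.cos_add]
      ring
    simp_rw [key]
    rw [intervalIntegral.integral_div,
        intervalIntegral.integral_add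
          ((by fun_prop : Continuous fun x => Real.cos ((((n:ℝ)-m)*π/L)*x)).intervalIntegrable _ _)
          ((by fun_prop : Continuous fun x => Real.cos ((((n:ℝ)+m)*π/L)*x)).intervalIntegrable _ _),
        my_int_cos_c L hc1, my_int_cos_c L hc2]
    have s1 : Real.sin (((n:ℝ)-m)*π/L*L) = 0 := by
      rw [show ((n:ℝ)-m)*π/L*L = ((((n:ℤ)-(m:ℤ)):ℤ):ℝ)*π by push_cast; field_simp]
      exact Real.sin_int_mul_pi _
    have s2 : Real.sin (((n:ℝ)+m)*π/L*L) = 0 := by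
      rw [show ((n:ℝ)+m)*π/L*L = (((n+m:ℕ)):ℝ)*π by push_cast; field_simp]
      exact Real.sin_nat_mul_pi _
    rw [s1, s2]
    simp

lemma my_orth_sin {L : ℝ} (hL : 0 < L) {n m : ℕ} (hn : 0 < n) (hm : 0 < m) :
    (∫ x in (0:ℝ)..L, Real.sin ((n:ℝ)*π/L*x) * Real.sin ((m:ℝ)*π/L*x))
      = if n = m then L/2 else 0 := by
  have hLne : L ≠ 0 := hL.ne'
  by_cases h : n = m
  · subst h
    have hnR : ((n:ℝ)) ≠ 0 := Nat.cast_ne_zero.mpr hn.ne'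
    have hc : (n:ℝ)*π/L ≠ 0 := div_ne_zero (mul_ne_zero hnR Real.pi_ne_zero) hLne
    simp only [if_pos]
    simp_rw [← sq]
    rw [my_int_sin_sq L hc]
    have hcl : (n:ℝ)*π/L*L = (n:ℝ)*π := by field_simp
    rw [hcl, Real.sin_nat_mul_pi]
    have hnpi : (n:ℝ)*π ≠ 0 := mul_ne_zero hnR Real.pi_ne_zero
    field_simp
    ring
  · rw [if_neg h]
    have h1 : ((n:ℝ) - m) ≠ 0 := sub_ne_zero.mpr (by exact_mod_cast h)
    have h2 : ((n:ℝ) + m) ≠ 0 := by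
      have : (0:ℝ) < (n:ℝ) + m := by
        have := Nat.cast_pos (α := ℝ) |>.mpr hn
        have := Nat.cast_pos (α := ℝ) |>.mpr hm
        linarith
      exact this.ne'
    have hc1 : ((n:ℝ)-m)*π/L ≠ 0 := div_ne_zero (mul_ne_zero h1 Real.pi_ne_zero) hLne
    have hc2 : ((n:ℝ)+m)*π/L ≠ 0 := div_ne_zero (mul_ne_zero h2 Real.pi_ne_zero) hLne
    have key : ∀ x:ℝ, Real.sin ((n:ℝ)*π/L*x) * Real.sin ((m:ℝ)*π/L*x)
        = (Real.cos ((((n:ℝ)-m)*π/L)*x) - Real.cos ((((n:ℝ)+m)*π/L)*x))/2 := by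
      intro x
      rw [show (((n:ℝ)-m)*π/L)*x = (n:ℝ)*π/L*x - (m:ℝ)*π/L*x by ring,
          show (((n:ℝ)+m)*π/L)*x = (n:ℝ)*π/L*x + (m:ℝ)*π/L*x by ring,
          Real.cos_sub, Real.cos_add]
      ring
    simp_rw [key]
    rw [intervalIntegral.integral_div,
        intervalIntegral.integral_sub
          ((by fun_prop : Continuous fun x => Real.cos ((((n:ℝ)-m)*π/L)*x)).intervalIntegrable _ _)
          ((by fun_prop : Continuous fun x => Real.cos ((((n:ℝ)+m)*π/L)*x)).intervalIntegrable _ _),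
        my_int_cos_c L hc1, my_int_cos_c L hc2]
    have s1 : Real.sin (((n:ℝ)-m)*π/L*L) = 0 := by
      rw [show ((n:ℝ)-m)*π/L*L = ((((n:ℤ)-(m:ℤ)):ℤ):ℝ)*π by push_cast; field_simp]
      exact Real.sin_int_mul_pi _
    have s2 : Real.sin (((n:ℝ)+m)*π/L*L) = 0 := by
      rw [show ((n:ℝ)+m)*π/L*L = (((n+m:ℕ)):ℝ)*π by push_cast; field_simp]
      exact Real.sin_nat_mul_pi _
    rw [s1, s2]
    simp

theorem dirichlet_energy_strip
    (L ε : ℝ) (hL : 0 < L) (hε : 0 < ε)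
    (s : Finset ℕ) (hs : ∀ n ∈ s, 0 < n) (g : ℕ → ℝ)
    (k : ℕ → ℝ) (hk : ∀ n, k n = n * Real.pi / L)
    (wx wy : ℝ → ℝ → ℝ)
    (hwx : ∀ x y : ℝ, wx x y =
      ∑ n ∈ s, g n * k n * (Real.sinh (k n * (ε - y)) / Real.sinh (k n * ε)) * Real.cos (k n * x))
    (hwy : ∀ x y : ℝ, wy x y =
      -∑ n ∈ s, g n * k n * (Real.cosh (k n * (ε - y)) / Real.sinh (k n * ε)) * Real.sin (k n * x)) :
    (∫ x in (0:ℝ)..L, ∫ y in (0:ℝ)..ε, ((wx x y) ^ 2 + (wy x y) ^ 2)) =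
      (L / 2) * ∑ n ∈ s, (g n) ^ 2 * k n * (Real.cosh (k n * ε) / Real.sinh (k n * ε)) := by
  have hkpos : ∀ n ∈ s, 0 < k n := by
    intro n hn; rw [hk]
    have h1 : (0:ℝ) < n := by exact_mod_cast hs n hn
    have := Real.pi_pos
    positivity
  have hsinh : ∀ n ∈ s, Real.sinh (k n * ε) ≠ 0 := fun n hn =>
    (Real.sinh_pos_iff.mpr (mul_pos (hkpos n hn) hε)).ne'
  -- the inner (y) integral
  have inner : ∀ x : ℝ, (∫ y in (0:ℝ)..ε, ((wx x y) ^ 2 + (wy x y) ^ 2))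
      = ∑ n ∈ s, ∑ m ∈ s,
          ((g n * k n / Real.sinh (k n * ε)) * (g m * k m / Real.sinh (k m * ε))
              * (∫ y in (0:ℝ)..ε, Real.sinh (k n * (ε - y)) * Real.sinh (k m * (ε - y)))
              * (Real.cos (k n * x) * Real.cos (k m * x))
           + (g n * k n / Real.sinh (k n * ε)) * (g m * k m / Real.sinh (k m * ε))
              * (∫ y in (0:ℝ)..ε, Real.cosh (k n * (ε - y)) * Real.cosh (k m * (ε - y)))
              * (Real.sin (k n * x) * Real.sin (k m * x))) := by
    intro x
    have e1 : ∀ y : ℝ, (wx x y) ^ 2 + (wy x y) ^ 2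
        = ∑ n ∈ s, ∑ m ∈ s,
            (((g n * k n / Real.sinh (k n * ε)) * (g m * k m / Real.sinh (k m * ε))
                * (Real.cos (k n * x) * Real.cos (k m * x)))
              * (Real.sinh (k n * (ε - y)) * Real.sinh (k m * (ε - y)))
             + ((g n * k n / Real.sinh (k n * ε)) * (g m * k m / Real.sinh (k m * ε))
                * (Real.sin (k n * x) * Real.sin (k m * x)))
              * (Real.cosh (k n * (ε - y)) * Real.cosh (k m * (ε - y)))) := by
      intro y
      rw [hwx, hwy, neg_sq, sq, sq, Finset.sum_mul_sum, Finset.sum_mul_sum,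
        ← Finset.sum_add_distrib]
      refine Finset.sum_congr rfl fun n hn => ?_
      rw [← Finset.sum_add_distrib]
      exact Finset.sum_congr rfl fun m hm => by ring
    simp_rw [e1]
    rw [intervalIntegral.integral_finset_sum
      (fun n hn => ((continuous_finset_sum s fun m hm => by fun_prop).intervalIntegrable _ _))]
    refine Finset.sum_congr rfl fun n hn => ?_
    rw [intervalIntegral.integral_finset_sum
      (fun m hm => ((by fun_prop : Continuous _).intervalIntegrable _ _))]
    refine Finset.sum_congr rfl fun m hm => ?_
    rw [intervalIntegral.integral_add
        ((by fun_prop : Continuous _).intervalIntegrable _ _)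
        ((by fun_prop : Continuous _).intervalIntegrable _ _),
      intervalIntegral.integral_const_mul, intervalIntegral.integral_const_mul]
    ring
  simp_rw [inner]
  -- the outer (x) integral
  have outer : (∫ x in (0:ℝ)..L, ∑ n ∈ s, ∑ m ∈ s,
          ((g n * k n / Real.sinh (k n * ε)) * (g m * k m / Real.sinh (k m * ε))
              * (∫ y in (0:ℝ)..ε, Real.sinh (k n * (ε - y)) * Real.sinh (k m * (ε - y)))
              * (Real.cos (k n * x) * Real.cos (k m * x))
           + (g n * k n / Real.sinh (k n * ε)) * (g m * k m / Real.sinh (k m * ε))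
              * (∫ y in (0:ℝ)..ε, Real.cosh (k n * (ε - y)) * Real.cosh (k m * (ε - y)))
              * (Real.sin (k n * x) * Real.sin (k m * x))))
      = ∑ n ∈ s, ∑ m ∈ s,
          (if n = m then
            (g n * k n / Real.sinh (k n * ε)) * (g m * k m / Real.sinh (k m * ε))
              * (((∫ y in (0:ℝ)..ε, Real.sinh (k n * (ε - y)) * Real.sinh (k m * (ε - y)))
                  + (∫ y in (0:ℝ)..ε, Real.cosh (k n * (ε - y)) * Real.cosh (k m * (ε - y))))
                 * (L / 2))
           else 0) := by
    rw [intervalIntegral.integral_finset_sum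
      (fun n hn => ((continuous_finset_sum s fun m hm => by fun_prop).intervalIntegrable _ _))]
    refine Finset.sum_congr rfl fun n hn => ?_
    rw [intervalIntegral.integral_finset_sum
      (fun m hm => ((by fun_prop : Continuous _).intervalIntegrable _ _))]
    refine Finset.sum_congr rfl fun m hm => ?_
    rw [intervalIntegral.integral_add
        ((by fun_prop : Continuous _).intervalIntegrable _ _)
        ((by fun_prop : Continuous _).intervalIntegrable _ _),
      intervalIntegral.integral_const_mul, intervalIntegral.integral_const_mul,
      hk n, hk m, my_orth_cos hL (hs n hn) (hs m hm), my_orth_sin hL (hs n hn) (hs m hm)]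
    split_ifs with h
    · ring
    · ring
  rw [outer]
  -- collapse the double sum
  have diag : ∀ n ∈ s,
      ((∫ y in (0:ℝ)..ε, Real.sinh (k n * (ε - y)) * Real.sinh (k n * (ε - y)))
        + (∫ y in (0:ℝ)..ε, Real.cosh (k n * (ε - y)) * Real.cosh (k n * (ε - y))))
      = Real.sinh (k n * ε) * Real.cosh (k n * ε) / k n := by
    intro n hn
    have hk0 : k n ≠ 0 := (hkpos n hn).ne'
    have h2k : 2 * k n ≠ 0 := by simpa using hk0
    rw [← intervalIntegral.integral_add
        ((by fun_prop : Continuous _).intervalIntegrable _ _)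
        ((by fun_prop : Continuous _).intervalIntegrable _ _)]
    have e : ∀ y : ℝ, Real.sinh (k n * (ε - y)) * Real.sinh (k n * (ε - y))
        + Real.cosh (k n * (ε - y)) * Real.cosh (k n * (ε - y))
        = Real.cosh (2 * k n * (ε - y)) := by
      intro y
      rw [show 2 * k n * (ε - y) = 2 * (k n * (ε - y)) by ring, Real.cosh_two_mul]
      ring
    simp_rw [e]
    rw [my_int_cosh_sub ε h2k,
      show 2 * k n * ε = 2 * (k n * ε) by ring, Real.sinh_two_mul]
    field_simp
  simp_rw [Finset.sum_ite_eq]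
  rw [Finset.mul_sum]
  refine Finset.sum_congr rfl fun n hn => ?_
  rw [if_pos hn, diag n hn]
  have hk0 : k n ≠ 0 := (hkpos n hn).ne'
  have hsn : Real.sinh (k n * ε) ≠ 0 := hsinh n hn
  field_simp
end

section
/- Let λ > 0 and δ ∈ (0,1). Let E : ℝ → ℝ be continuous on [0,1], nonnegative on [0,1], and nondecreasing on [0,1], and assume that 2·λ·∫_s^{s+δ} E(t) dt ≤ E(s+δ) − E(s) for every s ∈ [0, 1−δ]. Then E(s) ≤ exp(−2·λ·(1 − δ − s))·E(1) for every s ∈ [0, 1−δ]. -/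
open Set intervalIntegral MeasureTheory

theorem continuous_saint_venant
    (lam δ : ℝ) (hlam : 0 < lam) (hδ0 : 0 < δ) (hδ1 : δ < 1)
    (E : ℝ → ℝ)
    (hcont : ContinuousOn E (Icc 0 1))
    (hnonneg : ∀ t ∈ Icc (0:ℝ) 1, 0 ≤ E t)
    (hmono : MonotoneOn E (Icc 0 1))
    (hwindow : ∀ s ∈ Icc (0:ℝ) (1 - δ),
      2 * lam * ∫ t in s..(s + δ), E t ≤ E (s + δ) - E s) :
    ∀ s ∈ Icc (0:ℝ) (1 - δ), E s ≤ Real.exp (-(2 * lam * (1 - δ - s))) * E 1 := by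
  intro s hs
  obtain ⟨hs0, hs1⟩ := hs
  have hδsub : Icc (0:ℝ) (1 - δ) ⊆ Icc 0 1 := Icc_subset_Icc le_rfl (by linarith)
  have hint : ∀ a b : ℝ, 0 ≤ a → a ≤ b → b ≤ 1 →
      IntervalIntegrable E volume a b := by
    intro a b ha hab hb1
    exact (hcont.mono (by rw [uIcc_of_le hab]; exact Icc_subset_Icc ha hb1)).intervalIntegrable
  set F : ℝ → ℝ := fun x => ∫ t in (0:ℝ)..x, E t with hFdef
  set G : ℝ → ℝ := fun x => ∫ t in x..(x + δ), E t with hGdef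
  have hGF : ∀ x ∈ Icc (0:ℝ) (1 - δ), G x = F (x + δ) - F x := by
    intro x hx
    have h1 : IntervalIntegrable E volume 0 x := hint 0 x le_rfl hx.1 (by linarith [hx.2])
    have h2 : IntervalIntegrable E volume x (x + δ) :=
      hint x (x + δ) hx.1 (by linarith) (by linarith [hx.2])
    have := intervalIntegral.integral_add_adjacent_intervals h1 h2
    simp only [hGdef, hFdef]
    linarith [this]
  have hFcont : ContinuousOn F (Icc 0 1) := by
    have h01 : IntervalIntegrable E volume 0 1 := hint 0 1 le_rfl zero_le_one le_rfl
    have := intervalIntegral.continuousOn_primitive_interval'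
      (μ := volume) (b₁ := (0:ℝ)) (b₂ := 1) (a := (0:ℝ)) h01 left_mem_uIcc
    rwa [uIcc_of_le zero_le_one] at this
  have hGcont : ContinuousOn G (Icc 0 (1 - δ)) := by
    have hshift : ContinuousOn (fun x => F (x + δ)) (Icc 0 (1 - δ)) := by
      refine hFcont.comp (continuous_id.add continuous_const).continuousOn ?_
      intro x hx
      have h1 := hx.1; have h2 := hx.2
      show x + δ ∈ Icc (0:ℝ) 1
      exact ⟨by linarith, by linarith⟩
    exact ((hshift.sub (hFcont.mono hδsub)).congr hGF)
  -- the auxiliary function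
  set f : ℝ → ℝ := fun x => Real.exp (-(2 * lam * x)) * G x with hfdef
  set φ : ℝ → ℝ :=
    fun x => Real.exp (-(2 * lam * x)) * ((E (x + δ) - E x) - 2 * lam * G x) with hφdef
  have hmonof : MonotoneOn f (Icc 0 (1 - δ)) := by
    refine monotoneOn_of_hasDerivWithinAt_nonneg (convex_Icc _ _)
      ((Real.continuous_exp.comp (continuous_const.mul continuous_id).neg).continuousOn.mul hGcont)
      (f' := φ) ?_ ?_
    · intro x hx
      rw [interior_Icc] at hx
      obtain ⟨hx0, hx1⟩ := hx
      have hxmem : x ∈ Icc (0:ℝ) (1 - δ) := ⟨hx0.le, hx1.le⟩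
      have hopen : IsOpen (Ioo (0:ℝ) 1) := isOpen_Ioo
      have hcontOn : ContinuousOn E (Ioo 0 1) := hcont.mono Ioo_subset_Icc_self
      have hEx : ContinuousAt E x :=
        hcont.continuousAt (Icc_mem_nhds (by linarith) (by linarith))
      have hExδ : ContinuousAt E (x + δ) :=
        hcont.continuousAt (Icc_mem_nhds (by linarith) (by linarith))
      have hmx : StronglyMeasurableAtFilter E (nhds x) :=
        hcontOn.stronglyMeasurableAtFilter hopen x ⟨by linarith, by linarith⟩
      have hmxδ : StronglyMeasurableAtFilter E (nhds (x + δ)) :=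
        hcontOn.stronglyMeasurableAtFilter hopen (x + δ) ⟨by linarith, by linarith⟩
      have hF1 : HasDerivAt F (E x) x :=
        intervalIntegral.integral_hasDerivAt_right
          (hint 0 x le_rfl hx0.le (by linarith)) hmx hEx
      have hF2' : HasDerivAt F (E (x + δ)) (x + δ) :=
        intervalIntegral.integral_hasDerivAt_right
          (hint 0 (x + δ) le_rfl (by linarith) (by linarith)) hmxδ hExδ
      have hF2 : HasDerivAt (fun y => F (y + δ)) (E (x + δ)) x := by
        have := hF2'.comp x ((hasDerivAt_id x).add_const δ)
        simp only [mul_one] at this; exact this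
      have hGd' : HasDerivAt (fun y => F (y + δ) - F y) (E (x + δ) - E x) x := hF2.sub hF1
      have hGd : HasDerivAt G (E (x + δ) - E x) x := by
        refine hGd'.congr_of_eventuallyEq ?_
        filter_upwards [Ioo_mem_nhds hx0 hx1] with y hy
        exact hGF y ⟨hy.1.le, hy.2.le⟩
      have hexp : HasDerivAt (fun y => Real.exp (-(2 * lam * y)))
          (Real.exp (-(2 * lam * x)) * (-(2 * lam))) x := by
        have hlin : HasDerivAt (fun y : ℝ => -(2 * lam * y)) (-(2 * lam)) x := by
          have h := ((hasDerivAt_id x).const_mul (2 * lam)).neg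
          simp only [mul_one] at h; exact h
        exact hlin.exp
      have hfd : HasDerivAt f (φ x) x := by
        have h := hexp.mul hGd
        have hEq : φ x = Real.exp (-(2 * lam * x)) * (-(2 * lam)) * G x +
            Real.exp (-(2 * lam * x)) * (E (x + δ) - E x) := by
          simp only [hφdef]; ring
        rw [hfdef, hEq]
        exact h
      exact hfd.hasDerivWithinAt
    · intro x hx
      rw [interior_Icc] at hx
      have hxmem : x ∈ Icc (0:ℝ) (1 - δ) := ⟨hx.1.le, hx.2.le⟩
      have hw := hwindow x hxmem
      have hge : (0:ℝ) ≤ (E (x + δ) - E x) - 2 * lam * G x := by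
        simp only [hGdef]; linarith
      exact mul_nonneg (Real.exp_pos _).le hge
  -- lower bound: δ * E s ≤ G s
  have hlow : δ * E s ≤ G s := by
    have hc : IntervalIntegrable (fun _ => E s) volume s (s + δ) := intervalIntegrable_const
    have hi : IntervalIntegrable E volume s (s + δ) :=
      hint s (s + δ) hs0 (by linarith) (by linarith)
    have hm : ∫ t in s..(s + δ), E s ≤ ∫ t in s..(s + δ), E t := by
      refine intervalIntegral.integral_mono_on (by linarith) hc hi ?_
      intro t ht
      exact hmono ⟨hs0, by linarith⟩ ⟨by linarith [ht.1], by linarith [ht.2]⟩ ht.1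
    simpa [mul_comm] using hm
  -- upper bound: G (1 - δ) ≤ δ * E 1
  have hup : G (1 - δ) ≤ δ * E 1 := by
    have hc : IntervalIntegrable (fun _ => E 1) volume (1 - δ) 1 := intervalIntegrable_const
    have hi : IntervalIntegrable E volume (1 - δ) 1 :=
      hint (1 - δ) 1 (by linarith) (by linarith) le_rfl
    have hm : ∫ t in (1 - δ)..1, E t ≤ ∫ t in (1 - δ)..1, E 1 := by
      refine intervalIntegral.integral_mono_on (by linarith) hi hc ?_
      intro t ht
      exact hmono ⟨by linarith [ht.1], ht.2⟩ ⟨zero_le_one, le_rfl⟩ ht.2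
    have : G (1 - δ) = ∫ t in (1 - δ)..1, E t := by
      simp only [hGdef]
      norm_num
    rw [this]
    simpa [mul_comm] using hm
  have hfs : f s ≤ f (1 - δ) :=
    hmonof ⟨hs0, hs1⟩ ⟨by linarith, le_rfl⟩ hs1
  have hE1 : 0 ≤ E 1 := hnonneg 1 ⟨zero_le_one, le_rfl⟩
  have hexp_pos : (0:ℝ) < Real.exp (-(2 * lam * s)) := Real.exp_pos _
  have hchain : Real.exp (-(2 * lam * s)) * (δ * E s) ≤
      Real.exp (-(2 * lam * (1 - δ))) * (δ * E 1) := by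
    calc Real.exp (-(2 * lam * s)) * (δ * E s)
        ≤ Real.exp (-(2 * lam * s)) * G s := by
          exact mul_le_mul_of_nonneg_left hlow hexp_pos.le
      _ = f s := rfl
      _ ≤ f (1 - δ) := hfs
      _ = Real.exp (-(2 * lam * (1 - δ))) * G (1 - δ) := rfl
      _ ≤ Real.exp (-(2 * lam * (1 - δ))) * (δ * E 1) :=
          mul_le_mul_of_nonneg_left hup (Real.exp_pos _).le
  have hsplit : Real.exp (-(2 * lam * (1 - δ))) =
      Real.exp (-(2 * lam * s)) * Real.exp (-(2 * lam * (1 - δ - s))) := by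
    rw [← Real.exp_add]; ring_nf
  rw [hsplit] at hchain
  have hcancel : δ * E s ≤ Real.exp (-(2 * lam * (1 - δ - s))) * (δ * E 1) := by
    have := (mul_le_mul_iff_right₀ hexp_pos).mp (by linarith [hchain] :
      Real.exp (-(2 * lam * s)) * (δ * E s) ≤
        Real.exp (-(2 * lam * s)) * (Real.exp (-(2 * lam * (1 - δ - s))) * (δ * E 1)))
    exact this
  nlinarith [hcancel]
end
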